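/- Let Ω ⊂ ℝⁿ be a bounded smooth domain and u a 2-convex solution of σ₂(D²u) = 1 in Ω with u = 0 on ∂Ω. Then the mean curvature of ∂Ω is strictly positive at every boundary point. -/

import Mathlib

open scoped BigOperators

noncomputable def sigma2M {m : ℕ} (A : Matrix (Fin m) (Fin m) ℝ) : ℝ :=
  ((A.trace) ^ 2 - (A * A).trace) / 2

/-- The Hessian matrix D²u(x). -/
noncomputable def hess {m : ℕ} (u : (Fin m → ℝ) → ℝ) (x : Fin m → ℝ) :
    Matrix (Fin m) (Fin m) ℝ :=
  Matrix.of fun i j => iteratedFDeriv ℝ 2 u x ![Pi.single i 1, Pi.single j 1]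

lemma hess_apply' {m : ℕ} (u : (Fin m → ℝ) → ℝ) (x : Fin m → ℝ) (i j : Fin m) :
    hess u x i j = fderiv ℝ (fderiv ℝ u) x (Pi.single i 1) (Pi.single j 1) := by
  simp [hess, iteratedFDeriv_two_apply]

lemma hasDerivAt_fderiv_along {E : Type*} [NormedAddCommGroup E] [NormedSpace ℝ E]
    {u : E → ℝ} {γ : ℝ → E} {γ' : E} {t₀ : ℝ}
    (hu : ContDiffAt ℝ 2 u (γ t₀)) (hγ : HasDerivAt γ γ' t₀) (w : E) :
    HasDerivAt (fun t => fderiv ℝ u (γ t) w)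
      (fderiv ℝ (fderiv ℝ u) (γ t₀) γ' w) t₀ := by
  have h1 : ContDiffAt ℝ 1 (fderiv ℝ u) (γ t₀) := hu.fderiv_right (by norm_num)
  have h2 : HasFDerivAt (fderiv ℝ u) (fderiv ℝ (fderiv ℝ u) (γ t₀)) (γ t₀) :=
    (h1.differentiableAt (by norm_num)).hasFDerivAt
  have h3 : HasDerivAt (fun t => fderiv ℝ u (γ t)) (fderiv ℝ (fderiv ℝ u) (γ t₀) γ') t₀ :=
    h2.comp_hasDerivAt t₀ hγ
  have := h3.clm_apply (hasDerivAt_const t₀ w)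
  simpa using this

lemma hasDerivAt_comp_curve {E : Type*} [NormedAddCommGroup E] [NormedSpace ℝ E]
    {u : E → ℝ} {γ : ℝ → E} {γ' : E} {t₀ : ℝ}
    (hu : DifferentiableAt ℝ u (γ t₀)) (hγ : HasDerivAt γ γ' t₀) :
    HasDerivAt (fun t => u (γ t)) (fderiv ℝ u (γ t₀) γ') t₀ :=
  hu.hasFDerivAt.comp_hasDerivAt t₀ hγ

/-- Second derivative test at a local max, one-variable version. -/
lemma snd_deriv_nonpos_of_isLocalMax {f g : ℝ → ℝ} {c : ℝ}
    (hf : ∀ᶠ t in nhds (0:ℝ), HasDerivAt f (g t) t)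
    (hg : HasDerivAt g c 0) (hmax : IsLocalMax f 0) : c ≤ 0 := by
  by_contra hc
  push_neg at hc
  have hg0 : g 0 = 0 := by
    have := hmax.deriv_eq_zero
    rwa [hf.self_of_nhds.deriv] at this
  have hslope : Filter.Tendsto (fun t => g t / t) (nhdsWithin 0 {(0:ℝ)}ᶜ) (nhds c) := by
    have := hasDerivAt_iff_tendsto_slope.1 hg
    simpa [slope_fun_def_field, hg0] using this
  have hpos : ∀ᶠ t in nhdsWithin (0:ℝ) (Set.Ioi 0), 0 < g t := by
    have h1 : ∀ᶠ t in nhdsWithin 0 {(0:ℝ)}ᶜ, 0 < g t / t :=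
      hslope.eventually (eventually_gt_nhds hc)
    have h2 : ∀ᶠ t in nhdsWithin (0:ℝ) (Set.Ioi 0), 0 < g t / t :=
      h1.filter_mono (nhdsWithin_mono 0 (fun t ht => ne_of_gt ht))
    filter_upwards [h2, self_mem_nhdsWithin] with t h ht
    rw [div_pos_iff] at h
    rcases h with ⟨h, _⟩ | ⟨_, h⟩
    · exact h
    · exact absurd ht (by simpa using h.le)
  rw [eventually_nhdsWithin_iff] at hpos
  rcases Metric.eventually_nhds_iff.1 (hpos.and hf) with ⟨δ, hδ, hδp⟩
  set b := δ / 2 with hb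
  have hbpos : 0 < b := by positivity
  have hmem : ∀ t ∈ Set.Icc (0:ℝ) b, dist t 0 < δ := by
    intro t ht
    rw [Real.dist_eq, sub_zero, abs_of_nonneg ht.1]
    calc t ≤ b := ht.2
    _ < δ := by simp [hb]; linarith
  have hmono : StrictMonoOn f (Set.Icc (0:ℝ) b) := by
    apply strictMonoOn_of_deriv_pos (convex_Icc _ _)
    · intro t ht
      exact ((hδp (hmem t ht)).2).differentiableAt.continuousAt.continuousWithinAt
    · intro t ht
      rw [interior_Icc] at ht
      have h := hδp (hmem t ⟨ht.1.le, ht.2.le⟩)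
      rw [h.2.deriv]
      exact h.1 ht.1
  rcases Metric.eventually_nhds_iff.1 hmax with ⟨ε, hε, hεp⟩
  set t := min b (ε/2) with ht
  have htpos : 0 < t := by positivity
  have h1 : f 0 < f t := hmono ⟨le_rfl, hbpos.le⟩ ⟨htpos.le, min_le_left _ _⟩ htpos
  have h2 : f t ≤ f 0 := hεp (by
    rw [Real.dist_eq, sub_zero, abs_of_pos htpos]
    calc t ≤ ε/2 := min_le_right _ _
    _ < ε := by linarith)
  linarith

/-- At an interior local max of a C² function, diagonal Hessian entries are ≤ 0. -/
lemma hess_diag_nonpos_of_isLocalMax {m : ℕ} {u : (Fin m → ℝ) → ℝ}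
    {V : Set (Fin m → ℝ)} (hV : IsOpen V) (hu : ContDiffOn ℝ 2 u V)
    {p : Fin m → ℝ} (hp : p ∈ V) (hmax : IsLocalMax u p) (i : Fin m) :
    hess u p i i ≤ 0 := by
  set e : Fin m → ℝ := Pi.single i 1 with he
  set γ : ℝ → Fin m → ℝ := fun t => p + t • e with hγ
  have hγd : ∀ t : ℝ, HasDerivAt γ e t := by
    intro t
    have := ((hasDerivAt_id t).smul_const e).const_add p
    rw [one_smul] at this
    exact this
  have hγc : Continuous γ :=
    continuous_const.add (continuous_id.smul continuous_const)
  have hγ0 : γ 0 = p := by simp [hγ]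
  have hev : ∀ᶠ t in nhds (0:ℝ), γ t ∈ V :=
    hγc.continuousAt.preimage_mem_nhds (by rw [hγ0]; exact hV.mem_nhds hp)
  have hf : ∀ᶠ t in nhds (0:ℝ), HasDerivAt (fun t => u (γ t)) (fderiv ℝ u (γ t) e) t := by
    filter_upwards [hev] with t ht
    exact hasDerivAt_comp_curve
      (((hu.contDiffAt (hV.mem_nhds ht)).differentiableAt (by norm_num))) (hγd t)
  have hg : HasDerivAt (fun t => fderiv ℝ u (γ t) e) (fderiv ℝ (fderiv ℝ u) p e e) 0 := by
    have := hasDerivAt_fderiv_along (γ := γ) (t₀ := 0)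
      (by rw [hγ0]; exact hu.contDiffAt (hV.mem_nhds hp)) (hγd 0) e
    rwa [hγ0] at this
  have hmax' : IsLocalMax (fun t => u (γ t)) 0 := by
    have hm : IsLocalMax u (γ 0) := by rwa [hγ0]
    exact hm.comp_continuous hγc.continuousAt
  have := snd_deriv_nonpos_of_isLocalMax hf hg hmax'
  rwa [hess_apply']

lemma sigma2M_formula {m : ℕ} (A : Matrix (Fin m) (Fin m) ℝ) :
    sigma2M A = ((∑ j, A j j)^2 - ∑ j, ∑ k, A j k * A k j)/2 := by
  simp [sigma2M, Matrix.trace, Matrix.diag, Matrix.mul_apply]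

lemma continuousOn_hess {m : ℕ} {u : (Fin m → ℝ) → ℝ} {V : Set (Fin m → ℝ)}
    (hV : IsOpen V) (hu : ContDiffOn ℝ 2 u V) (i j : Fin m) :
    ContinuousOn (fun x => hess u x i j) V := by
  have h1 : ContinuousOn (iteratedFDerivWithin ℝ 2 u V) V :=
    hu.continuousOn_iteratedFDerivWithin le_rfl hV.uniqueDiffOn
  have h2 : ContinuousOn (iteratedFDeriv ℝ 2 u) V :=
    h1.congr fun x hx => (iteratedFDerivWithin_of_isOpen 2 hV hx).symm
  have h3 : Continuous fun A : ContinuousMultilinearMap ℝ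
      (fun _ : Fin 2 => (Fin m → ℝ)) ℝ => A ![Pi.single i 1, Pi.single j 1] :=
    continuous_eval_const _
  exact h3.comp_continuousOn h2

/-- If u is a 2-convex solution of σ₂(D²u) = 1 in a bounded smooth domain Ω with
u = 0 on ∂Ω, then the mean curvature of ∂Ω is strictly positive at every boundary
point.  The boundary point is taken to be the origin and ∂Ω is written locally as a
graph xₙ = φ(x') with φ(0) = 0, Dφ(0) = 0 and Ω above the graph, so that the mean
curvature with respect to the outer normal is Σᵢ h_{ii} = Σᵢ φ_{ii}(0) = Δφ(0). -/
theorem mean_curvature_positive {n : ℕ}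
    (Ω : Set (Fin (n + 1) → ℝ)) (hΩopen : IsOpen Ω) (hΩbd : Bornology.IsBounded Ω)
    (u : (Fin (n + 1) → ℝ) → ℝ)
    (V : Set (Fin (n + 1) → ℝ)) (hV : IsOpen V) (hΩV : closure Ω ⊆ V)
    (hu : ContDiffOn ℝ 2 u V)
    (hconv : ∀ x ∈ Ω, 0 < (hess u x).trace ∧ 0 < sigma2M (hess u x))
    (heq : ∀ x ∈ Ω, sigma2M (hess u x) = 1)
    (hbc : ∀ x ∈ frontier Ω, u x = 0)
    (φ : (Fin n → ℝ) → ℝ) (hφ : ContDiff ℝ 2 φ)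
    (hφ0 : φ 0 = 0) (hdφ0 : fderiv ℝ φ 0 = 0)
    (h0 : (0 : Fin (n + 1) → ℝ) ∈ frontier Ω)
    (hgraph : ∃ U ∈ nhds (0 : Fin (n + 1) → ℝ),
      Ω ∩ U = {x ∈ U | φ (fun i => x i.castSucc) < x (Fin.last n)}) :
    0 < ∑ i : Fin n, hess φ 0 i i := by
  obtain ⟨U, hU, hUeq⟩ := hgraph
  set eL : Fin (n+1) → ℝ := Pi.single (Fin.last n) 1 with heL
  have h0V : (0 : Fin (n+1) → ℝ) ∈ V := hΩV (frontier_subset_closure h0)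
  have hfr_eq : frontier Ω = closure Ω \ Ω := hΩopen.frontier_eq
  -- Step 1: weak maximum principle
  have hle : ∀ x ∈ Ω, u x ≤ 0 := by
    by_contra hcon
    push_neg at hcon
    obtain ⟨q, hq, hq0⟩ := hcon
    have hK : IsCompact (closure Ω) := hΩbd.isCompact_closure
    obtain ⟨p, hpc, hpmax⟩ :=
      hK.exists_isMaxOn ⟨q, subset_closure hq⟩ ((hu.continuousOn).mono hΩV)
    have hup : u q ≤ u p := hpmax (subset_closure hq)
    have hpΩ : p ∈ Ω := by
      by_contra hpn
      have : p ∈ frontier Ω := by rw [hfr_eq]; exact ⟨hpc, hpn⟩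
      rw [hbc p this] at hup
      linarith
    have hlm : IsLocalMax u p := by
      filter_upwards [hΩopen.mem_nhds hpΩ] with y hy
      exact hpmax (subset_closure hy)
    have htr : (hess u p).trace ≤ 0 := by
      have : ∀ i, hess u p i i ≤ 0 := fun i =>
        hess_diag_nonpos_of_isLocalMax hV hu (hΩV (subset_closure hpΩ)) hlm i
      simp only [Matrix.trace, Matrix.diag]
      exact Finset.sum_nonpos fun i _ => this i
    linarith [(hconv p hpΩ).1]
  -- Step 2: the ray above the boundary point lies in Ω
  have hray : ∀ᶠ t in nhdsWithin (0:ℝ) (Set.Ioi 0), t • eL ∈ Ω := by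
    have hcont : Continuous (fun t : ℝ => t • eL) := continuous_id.smul continuous_const
    have h1 : ∀ᶠ t in nhds (0:ℝ), t • eL ∈ U :=
      hcont.continuousAt.preimage_mem_nhds (by simpa using hU)
    filter_upwards [h1.filter_mono nhdsWithin_le_nhds, self_mem_nhdsWithin] with t htU ht
    have hmem : t • eL ∈ {x ∈ U | φ (fun i => x i.castSucc) < x (Fin.last n)} := by
      refine ⟨htU, ?_⟩
      have hcs : (fun i : Fin n => (t • eL) i.castSucc) = 0 := by
        funext i
        simp [heL, Pi.single_apply, (Fin.castSucc_lt_last i).ne]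
      rw [hcs, hφ0]
      simpa [heL] using ht
    rw [← hUeq] at hmem
    exact hmem.1
  have u0 : u 0 = 0 := hbc 0 h0
  -- Step 3: the derivative of u in the e_last direction at 0 is ≤ 0
  set c : ℝ := fderiv ℝ u 0 eL with hcdef
  have hc : c ≤ 0 := by
    set g : ℝ → ℝ := fun t => u (t • eL) with hgdef
    have hgd : HasDerivAt g c 0 := by
      have h1 : HasDerivAt (fun t : ℝ => t • eL) eL 0 := by
        simpa using (hasDerivAt_id (0:ℝ)).smul_const eL
      have hdiff : DifferentiableAt ℝ u ((0:ℝ) • eL) := by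
        rw [zero_smul]
        exact (hu.contDiffAt (hV.mem_nhds h0V)).differentiableAt (by norm_num)
      have h2 := hasDerivAt_comp_curve hdiff h1
      rw [zero_smul] at h2
      exact h2
    have hslope : Filter.Tendsto (fun t => g t / t) (nhdsWithin 0 {(0:ℝ)}ᶜ) (nhds c) := by
      have := hasDerivAt_iff_tendsto_slope.1 hgd
      have hg0 : g 0 = 0 := by simp [hgdef, u0]
      simpa [slope_fun_def_field, hg0] using this
    have hslope' : Filter.Tendsto (fun t => g t / t) (nhdsWithin (0:ℝ) (Set.Ioi 0)) (nhds c) :=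
      hslope.mono_left (nhdsWithin_mono 0 (fun t ht => ne_of_gt ht))
    refine le_of_tendsto hslope' ?_
    filter_upwards [hray, self_mem_nhdsWithin] with t ht htpos
    exact div_nonpos_of_nonpos_of_nonneg (hle _ ht) (le_of_lt htpos)
  -- Step 4: the boundary second-order relation
  have hU0 : (0 : Fin (n+1) → ℝ) ∈ interior U := mem_interior_iff_mem_nhds.2 hU
  have hrel : ∀ i : Fin n, hess u 0 i.castSucc i.castSucc = -c * hess φ 0 i i := by
    intro i
    set δ : Fin n → ℝ := Pi.single i 1 with hδdef
    set Ei : Fin (n+1) → ℝ := Pi.single i.castSucc 1 with hEidef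
    set ψ : ℝ → ℝ := fun t => φ (t • δ) with hψdef
    set ψ' : ℝ → ℝ := fun t => fderiv ℝ φ (t • δ) δ with hψ'def
    set γ : ℝ → Fin (n+1) → ℝ := fun t => t • Ei + ψ t • eL with hγdef
    have hδd : ∀ t : ℝ, HasDerivAt (fun s : ℝ => s • δ) δ t := fun t => by
      simpa using (hasDerivAt_id t).smul_const δ
    have hψd : ∀ t, HasDerivAt ψ (ψ' t) t := fun t =>
      hasDerivAt_comp_curve ((hφ.differentiable (by norm_num)).differentiableAt) (hδd t)
    have hγd : ∀ t, HasDerivAt γ (Ei + ψ' t • eL) t := fun t => by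
      have := ((hasDerivAt_id t).smul_const Ei).add ((hψd t).smul_const eL)
      rw [one_smul] at this
      exact this
    have hψ'0 : ψ' 0 = 0 := by simp [hψ'def, hdφ0]
    have hψ0 : ψ 0 = 0 := by simp [hψdef, hφ0]
    have hγ0 : γ 0 = 0 := by simp [hγdef, hψ0]
    have hψc : Continuous ψ := hφ.continuous.comp (continuous_id.smul continuous_const)
    have hγc : Continuous γ :=
      (continuous_id.smul continuous_const).add (hψc.smul continuous_const)
    have hcs : ∀ t, (fun j : Fin n => γ t j.castSucc) = t • δ := by
      intro t
      funext j
      simp only [hγdef, hδdef, hEidef, Pi.add_apply, Pi.smul_apply, smul_eq_mul, heL,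
        Pi.single_apply, Fin.castSucc_inj, (Fin.castSucc_lt_last j).ne, if_false,
        mul_zero, add_zero]
    have hlastc : ∀ t, γ t (Fin.last n) = ψ t := by
      intro t
      simp [hγdef, hEidef, heL, Pi.single_apply, (Fin.castSucc_lt_last i).ne']
    have hUev : ∀ᶠ t in nhds (0:ℝ), γ t ∈ interior U :=
      hγc.continuousAt.preimage_mem_nhds (by rw [hγ0]; exact isOpen_interior.mem_nhds hU0)
    -- the graph points lie on the boundary of Ω, so u vanishes there
    have hfr : ∀ᶠ t in nhds (0:ℝ), u (γ t) = 0 := by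
      filter_upwards [hUev] with t htU
      apply hbc
      rw [hfr_eq]
      constructor
      · -- γ t ∈ closure Ω : approximate from above
        have hcont2 : Continuous (fun ε : ℝ => γ t + ε • eL) :=
          continuous_const.add (continuous_id.smul continuous_const)
        have htend : Filter.Tendsto (fun ε : ℝ => γ t + ε • eL)
            (nhdsWithin 0 (Set.Ioi 0)) (nhds (γ t)) := by
          have h := hcont2.continuousAt (x := 0)
          rw [ContinuousAt] at h
          simp only [zero_smul, add_zero] at h
          exact h.mono_left nhdsWithin_le_nhds
        apply mem_closure_of_tendsto htend
        have hUev2 : ∀ᶠ ε in nhds (0:ℝ), γ t + ε • eL ∈ interior U := by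
          apply hcont2.continuousAt.preimage_mem_nhds
          simp only [zero_smul, add_zero]
          exact isOpen_interior.mem_nhds htU
        filter_upwards [hUev2.filter_mono nhdsWithin_le_nhds, self_mem_nhdsWithin]
          with ε hεU hεpos
        have hmem : γ t + ε • eL ∈
            {x ∈ U | φ (fun i => x i.castSucc) < x (Fin.last n)} := by
          refine ⟨interior_subset hεU, ?_⟩
          have h1 : (fun j : Fin n => (γ t + ε • eL) j.castSucc) = t • δ := by
            funext j
            simp only [Pi.add_apply, Pi.smul_apply, smul_eq_mul, heL,
              Pi.single_apply, (Fin.castSucc_lt_last j).ne, if_false, mul_zero, add_zero]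
            have := congrFun (hcs t) j
            simpa using this
          have h2 : (γ t + ε • eL) (Fin.last n) = ψ t + ε := by
            simp [hlastc t, heL, Pi.single_apply]
          rw [h1, h2]
          have hpsi : φ (t • δ) = ψ t := by rw [hψdef]
          have hε : (0:ℝ) < ε := hεpos
          linarith
        rw [← hUeq] at hmem
        exact hmem.1
      · -- γ t ∉ Ω
        intro hΩm
        have hmem : γ t ∈ Ω ∩ U := ⟨hΩm, interior_subset htU⟩
        rw [hUeq] at hmem
        have := hmem.2
        rw [hcs t, hlastc t] at this
        simp only [hψdef] at this
        exact lt_irrefl _ this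
    have hVev : ∀ᶠ t in nhds (0:ℝ), γ t ∈ V :=
      hγc.continuousAt.preimage_mem_nhds (by rw [hγ0]; exact hV.mem_nhds h0V)
    set G : ℝ → ℝ := fun t => fderiv ℝ u (γ t) Ei + ψ' t * fderiv ℝ u (γ t) eL with hGdef
    have hG0 : ∀ᶠ t in nhds (0:ℝ), G t = 0 := by
      filter_upwards [hVev, hfr.eventually_nhds] with t htV htfr
      have hd : HasDerivAt (fun s => u (γ s)) (G t) t := by
        have := hasDerivAt_comp_curve
          ((hu.contDiffAt (hV.mem_nhds htV)).differentiableAt (by norm_num)) (hγd t)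
        simpa [hGdef, map_add, map_smul, smul_eq_mul] using this
      have hzero : HasDerivAt (fun _ : ℝ => (0:ℝ)) (G t) t :=
        hd.congr_of_eventuallyEq (htfr.mono fun s hs => hs.symm)
      exact hzero.unique (hasDerivAt_const t 0)
    -- derivative of G at 0
    have hγd0 : HasDerivAt γ Ei 0 := by
      have := hγd 0
      rwa [hψ'0, zero_smul, add_zero] at this
    have hC2 : ContDiffAt ℝ 2 u (γ 0) := by
      rw [hγ0]; exact hu.contDiffAt (hV.mem_nhds h0V)
    have hAterm : HasDerivAt (fun t => fderiv ℝ u (γ t) Ei)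
        (hess u 0 i.castSucc i.castSucc) 0 := by
      have := hasDerivAt_fderiv_along hC2 hγd0 Ei
      rw [hγ0] at this
      rw [hess_apply']
      exact this
    have hcterm : HasDerivAt (fun t => fderiv ℝ u (γ t) eL)
        (fderiv ℝ (fderiv ℝ u) 0 Ei eL) 0 := by
      have := hasDerivAt_fderiv_along hC2 hγd0 eL
      rwa [hγ0] at this
    have hψ'' : HasDerivAt ψ' (hess φ 0 i i) 0 := by
      have hφ2 : ContDiffAt ℝ 2 φ ((0:ℝ) • δ) := hφ.contDiffAt
      have := hasDerivAt_fderiv_along hφ2 (hδd 0) δ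
      rw [zero_smul] at this
      rw [hess_apply']
      exact this
    have hGd : HasDerivAt G
        (hess u 0 i.castSucc i.castSucc +
          (hess φ 0 i i * fderiv ℝ u (γ 0) eL + ψ' 0 * fderiv ℝ (fderiv ℝ u) 0 Ei eL)) 0 :=
      hAterm.add (hψ''.mul hcterm)
    have hGzero : HasDerivAt (fun _ : ℝ => (0:ℝ)) _ 0 :=
      hGd.congr_of_eventuallyEq (hG0.mono fun s hs => hs.symm)
    have hval := hGzero.unique (hasDerivAt_const 0 (0:ℝ))
    rw [hγ0, hψ'0, zero_mul, add_zero, ← hcdef] at hval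
    linarith [hval]
  -- Step 5: limits at the boundary point
  have hsymm : ∀ j k, hess u 0 j k = hess u 0 k j := by
    intro j k
    rw [hess_apply', hess_apply']
    exact ((hu.contDiffAt (hV.mem_nhds h0V)).isSymmSndFDerivAt (by simp [minSmoothness_of_isRCLikeNormedField])).eq _ _
  have hentry : ∀ j k : Fin (n+1), ContinuousAt (fun x => hess u x j k) 0 := fun j k =>
    (continuousOn_hess hV hu j k).continuousAt (hV.mem_nhds h0V)
  have htrT : Filter.Tendsto (fun x => ∑ j, hess u x j j) (nhds 0)
      (nhds (∑ j, hess u 0 j j)) :=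
    tendsto_finset_sum _ (fun j _ => hentry j j)
  have hσT : Filter.Tendsto (fun x => sigma2M (hess u x)) (nhds 0)
      (nhds (sigma2M (hess u 0))) := by
    have heqfun : (fun x => sigma2M (hess u x)) =
        fun x => ((∑ j, hess u x j j)^2 - ∑ j, ∑ k, hess u x j k * hess u x k j)/2 := by
      funext x
      exact sigma2M_formula _
    rw [heqfun, sigma2M_formula]
    exact (((htrT.pow 2).sub (tendsto_finset_sum _ (fun j _ =>
      tendsto_finset_sum _ (fun k _ => (hentry j k).mul (hentry k j))))).div_const 2)
  have hrayT : Filter.Tendsto (fun t : ℝ => t • eL)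
      (nhdsWithin 0 (Set.Ioi 0)) (nhds 0) := by
    have hcont : Continuous (fun t : ℝ => t • eL) := continuous_id.smul continuous_const
    have h := hcont.continuousAt (x := 0)
    rw [ContinuousAt] at h
    simp only [zero_smul] at h
    exact h.mono_left nhdsWithin_le_nhds
  have hσ0 : sigma2M (hess u 0) = 1 := by
    refine tendsto_nhds_unique (hσT.comp hrayT) ?_
    exact tendsto_const_nhds.congr' (hray.mono fun t ht => (heq _ ht).symm)
  have htr0 : 0 ≤ ∑ j, hess u 0 j j := by
    refine ge_of_tendsto (htrT.comp hrayT) ?_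
    filter_upwards [hray] with t ht
    have h1 := (hconv _ ht).1
    have h2 : (hess u (t • eL)).trace = ∑ j, hess u (t • eL) j j := by
      simp [Matrix.trace, Matrix.diag]
    simp only [Function.comp]
    linarith [h2 ▸ h1]
  -- Step 6: the algebraic Γ₂ argument
  set T := ∑ i : Fin n, hess u 0 i.castSucc i.castSucc with hTdef
  set d := hess u 0 (Fin.last n) (Fin.last n) with hddef
  have hs_split : ∑ j, hess u 0 j j = T + d := Fin.sum_univ_castSucc _
  have hdiagsq : ∑ j, (hess u 0 j j)^2 ≤ ∑ j, ∑ k, hess u 0 j k * hess u 0 k j := by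
    apply Finset.sum_le_sum
    intro j _
    have hnn : ∀ k, 0 ≤ hess u 0 j k * hess u 0 k j := fun k => by
      rw [hsymm k j]; exact mul_self_nonneg _
    calc (hess u 0 j j)^2 = hess u 0 j j * hess u 0 j j := sq (hess u 0 j j)
    _ ≤ ∑ k, hess u 0 j k * hess u 0 k j :=
      Finset.single_le_sum (fun k _ => hnn k) (Finset.mem_univ j)
  have hkey : 2 ≤ (∑ j, hess u 0 j j)^2 - ∑ j, (hess u 0 j j)^2 := by
    have h1 := hσ0
    rw [sigma2M_formula] at h1
    linarith
  have hsq_split : ∑ j, (hess u 0 j j)^2 =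
      (∑ i : Fin n, (hess u 0 i.castSucc i.castSucc)^2) + d^2 := Fin.sum_univ_castSucc _
  have hsqnn : 0 ≤ ∑ i : Fin n, (hess u 0 i.castSucc i.castSucc)^2 :=
    Finset.sum_nonneg fun i _ => sq_nonneg _
  have hTpos : 0 < T := by
    by_contra hT
    push_neg at hT
    have h2 : 2 ≤ (T + d)^2 - d^2 := by
      rw [← hs_split]
      linarith [hkey, hsq_split ▸ (by linarith [hsqnn] :
        d^2 ≤ ∑ j, (hess u 0 j j)^2)]
    have h3 : 0 ≤ T + d := hs_split ▸ htr0
    nlinarith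
  by_contra hφn
  push_neg at hφn
  have hTc : T = (-c) * ∑ i, hess φ 0 i i := by
    rw [hTdef, Finset.sum_congr rfl (fun i _ => hrel i), ← Finset.mul_sum]
  have : T ≤ 0 := by
    rw [hTc]
    exact mul_nonpos_of_nonneg_of_nonpos (by linarith) hφn
  linarith
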